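/- Let Q be a lower transition rate operator on a finite nonempty set 𝒳, and let (T_t)_{t≥0} be the associated family of operators determined by the differential equation d/dt T_t f = Q(T_t f) with T_0 f = f, with conjugate T̄_t f := −T_t(−f). Then for all f ∈ 𝓛(𝒳), x ∈ 𝒳 and t, s > 0: (i) if f(x) > min f then T_t f(x) > min f, and moreover T_t f(x) > min f holds if and only if T_s f(x) > min f; (ii) if f(x) < max f then T_t f(x) < max f, and T_t f(x) < max f holds if and only if T_s f(x) < max f; (iii) if f(x) > min f then T̄_t f(x) > min f, and T̄_t f(x) > min f holds if and only if T̄_s f(x) > min f; (iv) if f(x) < max f then T̄_t f(x) < max f, and T̄_t f(x) < max f holds if and only if T̄_s f(x) < max f. -/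

import Mathlib

open Filter Topology

/-- The minimum of a real-valued function on a finite nonempty type. -/
noncomputable def minf {X : Type*} [Fintype X] [Nonempty X] (f : X → ℝ) : ℝ :=
  Finset.univ.inf' Finset.univ_nonempty f

/-- The maximum of a real-valued function on a finite nonempty type. -/
noncomputable def maxf {X : Type*} [Fintype X] [Nonempty X] (f : X → ℝ) : ℝ :=
  Finset.univ.sup' Finset.univ_nonempty f

/-- The (real-valued) indicator function of a set. -/
noncomputable def ind {X : Type*} (A : Set X) : X → ℝ := A.indicator 1

/-- The conjugate (upper) operator `f ↦ -(Q (-f))`. -/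
def conjOp {X : Type*} (Q : (X → ℝ) → (X → ℝ)) : (X → ℝ) → (X → ℝ) :=
  fun f => -(Q (-f))

/-- A lower transition rate operator. -/
def IsLTRO {X : Type*} [Fintype X] (Q : (X → ℝ) → (X → ℝ)) : Prop :=
  (∀ μ : ℝ, Q (fun _ => μ) = 0) ∧
  (∀ f g : X → ℝ, Q f + Q g ≤ Q (f + g)) ∧
  (∀ l : ℝ, 0 ≤ l → ∀ f : X → ℝ, Q (l • f) = l • Q f) ∧
  (∀ x y : X, x ≠ y → 0 ≤ Q (ind {y}) x)

/-- A lower transition operator. -/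
def IsLTO {X : Type*} [Fintype X] [Nonempty X] (T : (X → ℝ) → (X → ℝ)) : Prop :=
  (∀ f : X → ℝ, ∀ x : X, minf f ≤ T f x) ∧
  (∀ f g : X → ℝ, T f + T g ≤ T (f + g)) ∧
  (∀ l : ℝ, 0 ≤ l → ∀ f : X → ℝ, T (l • f) = l • T f)

/-- `T` is the family of operators solving `d/dt T_t f = Q (T_t f)` on `[0,∞)`
with `T_0 f = f`. -/
def IsSol {X : Type*} [Fintype X] (Q : (X → ℝ) → (X → ℝ))
    (T : ℝ → (X → ℝ) → (X → ℝ)) : Prop :=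
  (∀ f : X → ℝ, T 0 f = f) ∧
  (∀ f : X → ℝ, ∀ t : ℝ, 0 ≤ t →
    HasDerivWithinAt (fun s => T s f) (Q (T t f)) (Set.Ici 0) t)

/-- Ergodicity of a lower transition rate operator, expressed via its
associated time-dependent family `T`. -/
def ErgodicQ {X : Type*} [Fintype X] (T : ℝ → (X → ℝ) → (X → ℝ)) : Prop :=
  ∀ f : X → ℝ, ∃ c : ℝ, Tendsto (fun t => T t f) atTop (𝓝 (fun _ : X => c))

/-- Ergodicity of a lower transition operator. -/
def ErgodicT {X : Type*} [Fintype X] (T : (X → ℝ) → (X → ℝ)) : Prop :=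
  ∀ f : X → ℝ, ∃ c : ℝ, Tendsto (fun n : ℕ => T^[n] f) atTop (𝓝 (fun _ : X => c))

/-- `x` is upper reachable from `y` (w.r.t. the lower transition rate operator `Q`). -/
def upperReach {X : Type*} [Fintype X] (Q : (X → ℝ) → (X → ℝ)) (y x : X) : Prop :=
  ∃ (n : ℕ) (p : ℕ → X), p 0 = y ∧ p n = x ∧
    ∀ k : ℕ, k < n → p (k + 1) ≠ p k ∧ 0 < conjOp Q (ind {p (k + 1)}) (p k)

/-- One step of the lower-reachability construction: `A ↦ A ∪ {y ∉ A : Q(𝟙_A)(y) > 0}`. -/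
def lowerStep {X : Type*} [Fintype X] (Q : (X → ℝ) → (X → ℝ)) (A : Set X) : Set X :=
  A ∪ {y : X | y ∉ A ∧ 0 < Q (ind A) y}

/-- `A` is lower reachable from `x`: `x ∈ Aₙ` where `n` is the first index with
`Aₙ = Aₙ₊₁` (equivalently, any such index, since the sequence is determined by
recursion and increasing). -/
def lowerReach {X : Type*} [Fintype X] (Q : (X → ℝ) → (X → ℝ)) (x : X) (A : Set X) : Prop :=
  ∃ n : ℕ, (lowerStep Q)^[n] A = (lowerStep Q)^[n + 1] A ∧ x ∈ (lowerStep Q)^[n] A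

/-- The set `𝒳_RA := {x : ∃ n ≥ 1, min T̄ⁿ 𝟙ₓ > 0}`. -/
noncomputable def XRA {X : Type*} [Fintype X] [Nonempty X]
    (T : (X → ℝ) → (X → ℝ)) : Set X :=
  {x : X | ∃ n : ℕ, 0 < minf ((conjOp T)^[n + 1] (ind {x}))}

/-- A regularly absorbing lower transition operator. -/
def RegAbs {X : Type*} [Fintype X] [Nonempty X] (T : (X → ℝ) → (X → ℝ)) : Prop :=
  (XRA T).Nonempty ∧ ∀ x : X, x ∉ XRA T → ∃ n : ℕ, 0 < T^[n + 1] (ind (XRA T)) x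

/-- The set `𝒳_1A := {x : min T̄ 𝟙ₓ > 0}`. -/
noncomputable def X1A {X : Type*} [Fintype X] [Nonempty X]
    (T : (X → ℝ) → (X → ℝ)) : Set X :=
  {x : X | 0 < minf (conjOp T (ind {x}))}

/-- A 1-step absorbing lower transition operator. -/
def OneStepAbs {X : Type*} [Fintype X] [Nonempty X] (T : (X → ℝ) → (X → ℝ)) : Prop :=
  (X1A T).Nonempty ∧ ∀ x : X, x ∉ X1A T → 0 < T (ind (X1A T)) x

/-- The operator (sup) norm of a non-negatively homogeneous operator. -/
noncomputable def opN {X : Type*} [Fintype X] (Q : (X → ℝ) → (X → ℝ)) : ℝ :=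
  sSup {r : ℝ | ∃ f : X → ℝ, ‖f‖ = 1 ∧ r = ‖Q f‖}

section helpers
variable {X : Type*} [Fintype X] [Nonempty X]

lemma minf_le (f : X → ℝ) (x : X) : minf f ≤ f x := Finset.inf'_le _ (Finset.mem_univ x)

lemma le_maxf (f : X → ℝ) (x : X) : f x ≤ maxf f := Finset.le_sup' _ (Finset.mem_univ x)

lemma le_minf {f : X → ℝ} {c : ℝ} (h : ∀ x, c ≤ f x) : c ≤ minf f :=
  Finset.le_inf' _ _ (fun x _ => h x)

lemma maxf_le {f : X → ℝ} {c : ℝ} (h : ∀ x, f x ≤ c) : maxf f ≤ c :=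
  Finset.sup'_le _ _ (fun x _ => h x)

lemma lt_minf {f : X → ℝ} {c : ℝ} (h : ∀ x, c < f x) : c < minf f := by
  obtain ⟨x, -, hx⟩ := Finset.exists_mem_eq_inf' (Finset.univ_nonempty (α := X)) f
  rw [minf, hx]; exact h x

lemma exists_maxf (f : X → ℝ) : ∃ x, maxf f = f x := by
  obtain ⟨x, -, hx⟩ := Finset.exists_mem_eq_sup' (Finset.univ_nonempty (α := X)) f
  exact ⟨x, hx⟩

lemma maxf_neg (f : X → ℝ) : maxf (-f) = -minf f := by
  apply le_antisymm
  · exact maxf_le fun x => by simpa using neg_le_neg (minf_le f x)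
  · obtain ⟨x, -, hx⟩ := Finset.exists_mem_eq_inf' (Finset.univ_nonempty (α := X)) f
    rw [minf, hx]
    simpa using le_maxf (-f) x

lemma minf_neg (f : X → ℝ) : minf (-f) = -maxf f := by
  have := maxf_neg (-f); rw [neg_neg] at this; linarith

end helpers

section calc_helpers

lemma mono_aux {a : ℝ} {f g : ℝ → ℝ}
    (hf : ∀ u ∈ Set.Ici a, HasDerivWithinAt f (g u) (Set.Ici a) u)
    (h0 : ∀ u ∈ Set.Ici a, 0 ≤ g u) :
    MonotoneOn f (Set.Ici a) := by
  apply monotoneOn_of_deriv_nonneg (convex_Ici a)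
    (fun u hu => (hf u hu).continuousWithinAt)
  · intro u hu
    rw [interior_Ici] at hu
    exact ((hf u (Set.mem_Ici.2 (le_of_lt (Set.mem_Ioi.1 hu)))).hasDerivAt (Ici_mem_nhds (Set.mem_Ioi.1 hu))).differentiableAt.differentiableWithinAt
  · intro u hu
    rw [interior_Ici] at hu
    rw [((hf u (Set.mem_Ici.2 (le_of_lt (Set.mem_Ioi.1 hu)))).hasDerivAt (Ici_mem_nhds (Set.mem_Ioi.1 hu))).deriv]
    exact h0 u (Set.mem_Ici.2 (le_of_lt (Set.mem_Ioi.1 hu)))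

lemma anti_aux {a : ℝ} {f g : ℝ → ℝ}
    (hf : ∀ u ∈ Set.Ici a, HasDerivWithinAt f (g u) (Set.Ici a) u)
    (h0 : ∀ u ∈ Set.Ici a, g u ≤ 0) :
    AntitoneOn f (Set.Ici a) := by
  apply antitoneOn_of_deriv_nonpos (convex_Ici a)
    (fun u hu => (hf u hu).continuousWithinAt)
  · intro u hu
    rw [interior_Ici] at hu
    exact ((hf u (Set.mem_Ici.2 (le_of_lt (Set.mem_Ioi.1 hu)))).hasDerivAt (Ici_mem_nhds (Set.mem_Ioi.1 hu))).differentiableAt.differentiableWithinAt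
  · intro u hu
    rw [interior_Ici] at hu
    rw [((hf u (Set.mem_Ici.2 (le_of_lt (Set.mem_Ioi.1 hu)))).hasDerivAt (Ici_mem_nhds (Set.mem_Ioi.1 hu))).deriv]
    exact h0 u (Set.mem_Ici.2 (le_of_lt (Set.mem_Ioi.1 hu)))

lemma proj_deriv {X : Type*} [Fintype X] {F : ℝ → X → ℝ} {F' : X → ℝ} {s : Set ℝ} {t : ℝ}
    (h : HasDerivWithinAt F F' s t) (x : X) :
    HasDerivWithinAt (fun u => F u x) (F' x) s t :=
  (ContinuousLinearMap.proj (R := ℝ) (φ := fun _ : X => ℝ) x).hasFDerivAt.comp_hasDerivWithinAt t h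

end calc_helpers

section Qfacts
variable {X : Type*} [Fintype X] [Nonempty X] {Q : (X → ℝ) → (X → ℝ)} (hQ : IsLTRO Q)

/-- A dominating constant for the diagonal rates. -/
noncomputable def Kc (Q : (X → ℝ) → (X → ℝ)) : ℝ := maxf (fun x : X => |Q (ind {x}) x|)

lemma Kc_nonneg : 0 ≤ Kc Q := by
  have x := Classical.arbitrary X
  unfold Kc
  exact le_trans (abs_nonneg _) (le_maxf (fun x : X => |Q (ind {x}) x|) x)

include hQ

lemma ltro_add_const (g : X → ℝ) (c : ℝ) : Q (fun z => g z + c) = Q g := by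
  apply le_antisymm
  · calc Q (fun z => g z + c) = Q (fun z => g z + c) + Q (fun _ => -c) := by
          rw [hQ.1 (-c), add_zero]
    _ ≤ Q ((fun z => g z + c) + fun _ => -c) := hQ.2.1 _ _
    _ = Q g := by
          have h7 : ((fun z => g z + c) + fun _ => -c) = g := by
            funext z; show (g z + c) + (-c) = g z; ring
          rw [h7]
  · calc Q g = Q g + Q (fun _ => c) := by rw [hQ.1 c, add_zero]
    _ ≤ Q (g + fun _ => c) := hQ.2.1 _ _
    _ = Q (fun z => g z + c) := by
          have h7 : (g + fun _ => c) = (fun z => g z + c) := by funext z; rfl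
          rw [h7]

lemma ltro_sum {ι : Type*} (s : Finset ι) (g : ι → X → ℝ) :
    ∑ i ∈ s, Q (g i) ≤ Q (∑ i ∈ s, g i) := by
  classical
  induction s using Finset.cons_induction with
  | empty => simp only [Finset.sum_empty]; exact le_of_eq (hQ.1 0).symm
  | cons a s ha ih =>
    rw [Finset.sum_cons, Finset.sum_cons]
    calc Q (g a) + ∑ i ∈ s, Q (g i) ≤ Q (g a) + Q (∑ i ∈ s, g i) := by
          exact add_le_add le_rfl ih
    _ ≤ Q (g a + ∑ i ∈ s, g i) := hQ.2.1 _ _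

lemma ltro_decomp (g : X → ℝ) (hg : 0 ≤ g) (x : X) :
    ∑ z : X, g z * Q (ind {z}) x ≤ Q g x := by
  classical
  have hrepr : g = ∑ z : X, g z • ind {z} := by
    funext w
    rw [Finset.sum_apply]
    rw [Finset.sum_eq_single w]
    · simp [ind, Set.indicator_apply]
    · intro z _ hzw
      simp [ind, Set.indicator_apply, Ne.symm hzw]
    · intro h; exact absurd (Finset.mem_univ w) h
  calc ∑ z : X, g z * Q (ind {z}) x = (∑ z : X, Q (g z • ind {z})) x := by
        rw [Finset.sum_apply]
        exact Finset.sum_congr rfl fun z _ => by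
          rw [hQ.2.2.1 (g z) (hg z) (ind {z})]; simp
  _ ≤ Q (∑ z : X, g z • ind {z}) x := ltro_sum hQ _ _ x
  _ = Q g x := by rw [← hrepr]

/-- core of Fact A: for nonnegative g, `Q g x ≥ -K g x`. -/
lemma ltro_core (g : X → ℝ) (hg : 0 ≤ g) (x : X) : -(Kc Q * g x) ≤ Q g x := by
  classical
  have h1 := ltro_decomp hQ g hg x
  have h2 : g x * Q (ind {x}) x ≤ ∑ z : X, g z * Q (ind {z}) x := by
    rw [← Finset.sum_erase_add Finset.univ _ (Finset.mem_univ x)]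
    have : 0 ≤ ∑ z ∈ Finset.univ.erase x, g z * Q (ind {z}) x := by
      apply Finset.sum_nonneg
      intro z hz
      exact mul_nonneg (hg z) (hQ.2.2.2 x z (Finset.ne_of_mem_erase hz).symm)
    linarith
  have h3 : -(Kc Q) ≤ Q (ind {x}) x := by
    have := le_maxf (fun x : X => |Q (ind {x}) x|) x
    have := neg_abs_le (Q (ind {x}) x)
    simp only [Kc]; linarith
  have h4 : g x * (-(Kc Q)) ≤ g x * Q (ind {x}) x :=
    mul_le_mul_of_nonneg_left h3 (hg x)
  nlinarith

/-- Fact A. -/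
lemma factA (h : X → ℝ) (x : X) : -(Kc Q * (h x - minf h)) ≤ Q h x := by
  have hg : (0:X → ℝ) ≤ fun z => h z - minf h := fun z => by
    simpa using minf_le h z
  have h1 := ltro_core hQ (fun z => h z - minf h) hg x
  have h2 : Q (fun z => (h z - minf h) + minf h) = Q (fun z => h z - minf h) :=
    ltro_add_const hQ _ _
  have h3 : (fun z => (h z - minf h) + minf h) = h := by funext z; ring
  rw [h3] at h2
  rw [h2]; exact h1

/-- Fact A'. -/
lemma factA' (h : X → ℝ) (x : X) : Q h x ≤ Kc Q * (maxf h - h x) := by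
  set d : X → ℝ := fun z => maxf h - h z with hd
  have hg : (0:X→ℝ) ≤ d := fun z => by simpa [hd] using le_maxf h z
  have h1 : Q (fun z => -(d z) + maxf h) = Q (fun z => -(d z)) := ltro_add_const hQ _ _
  have h3 : (fun z => -(d z) + maxf h) = h := by funext z; simp [hd]
  rw [h3] at h1
  have h4 : Q (fun z => -(d z)) x + Q d x ≤ 0 := by
    have := hQ.2.1 (fun z => -(d z)) d
    have h5 : (fun z => -(d z)) + d = fun _ => (0:ℝ) := by funext z; simp
    have := this x
    rw [h5] at this
    simpa [hQ.1 0] using this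
  have h6 := ltro_core hQ d hg x
  have : Q h x = Q (fun z => -(d z)) x := by rw [h1]
  rw [this]
  simp only [hd] at h6 ⊢
  linarith

/-- off-diagonal monotonicity. -/
lemma ltro_monoOff (g g' : X → ℝ) (y : X) (hle : g' ≤ g) (hy : g y = g' y) :
    Q g' y ≤ Q g y := by
  set d : X → ℝ := fun z => g z - g' z with hdd
  have hd0 : (0:X→ℝ) ≤ d := fun z => by simpa [hdd] using hle z
  have hdy : d y = 0 := by simp [hdd, hy]
  have h1 : 0 ≤ Q d y := by
    have h2 := ltro_decomp hQ d hd0 y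
    have h3 : 0 ≤ ∑ z : X, d z * Q (ind {z}) y := by
      apply Finset.sum_nonneg
      intro z _
      by_cases hz : z = y
      · subst hz; rw [hdy]; simp
      · exact mul_nonneg (hd0 z) (hQ.2.2.2 y z (Ne.symm hz))
    linarith
  have h4 := hQ.2.1 g' d y
  have h5 : g' + d = g := by funext z; simp [hdd]
  rw [h5] at h4
  simp only [Pi.add_apply] at h4
  linarith

/-- mixed superadditivity bound. -/
lemma ltro_mixed (p q : X → ℝ) (y : X) (hq : 0 ≤ q) :
    Q (p + q) y ≤ Q p y + Kc Q * maxf q := by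
  have h1 := hQ.2.1 (p + q) (-q) y
  have h2 : (p + q) + (-q) = p := by funext z; simp
  rw [h2] at h1
  have h3 : -(Kc Q * ((-q) y - minf (-q))) ≤ Q (-q) y := factA hQ (-q) y
  rw [minf_neg] at h3
  have h4 : Kc Q * (maxf q - q y) ≤ Kc Q * maxf q :=
    mul_le_mul_of_nonneg_left (by have := hq y; simp only [Pi.zero_apply] at this; linarith) Kc_nonneg
  simp only [Pi.add_apply, Pi.neg_apply] at h1 h3
  linarith

end Qfacts

section conjfacts
variable {X : Type*} [Fintype X] [Nonempty X] {Q : (X → ℝ) → (X → ℝ)} (hQ : IsLTRO Q)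

lemma conj_apply (g : X → ℝ) (x : X) : conjOp Q g x = -(Q (-g) x) := rfl

include hQ

lemma factA_conj (h : X → ℝ) (x : X) : -(Kc Q * (h x - minf h)) ≤ conjOp Q h x := by
  rw [conj_apply]
  have := factA' hQ (-h) x
  rw [maxf_neg] at this
  simp only [Pi.neg_apply] at this
  linarith

lemma conj_add_const (g : X → ℝ) (c : ℝ) : conjOp Q (fun z => g z + c) = conjOp Q g := by
  unfold conjOp
  have : (-fun z => g z + c) = fun z => (-g) z + (-c) := by funext z; simp; ring
  rw [this, ltro_add_const hQ (-g) (-c)]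

lemma conj_monoOff (g g' : X → ℝ) (y : X) (hle : g' ≤ g) (hy : g y = g' y) :
    conjOp Q g' y ≤ conjOp Q g y := by
  rw [conj_apply, conj_apply]
  have := ltro_monoOff hQ (-g') (-g) y (fun z => by simpa using hle z) (by simp [hy])
  linarith

lemma conj_mixed (p q : X → ℝ) (y : X) (hq : 0 ≤ q) :
    conjOp Q (p + q) y ≤ conjOp Q p y + Kc Q * maxf q := by
  rw [conj_apply, conj_apply]
  have h1 := hQ.2.1 (-p) (-q) y
  have h2 : (-p) + (-q) = -(p + q) := by funext z; simp; ring
  rw [h2] at h1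
  have h3 : -(Kc Q * ((-q) y - minf (-q))) ≤ Q (-q) y := factA hQ (-q) y
  rw [minf_neg] at h3
  have h4 : Kc Q * (maxf q - q y) ≤ Kc Q * maxf q :=
    mul_le_mul_of_nonneg_left (by have := hq y; simp only [Pi.zero_apply] at this; linarith) Kc_nonneg
  simp only [Pi.add_apply, Pi.neg_apply] at h1 h3 ⊢
  linarith

lemma conj_smul (l : ℝ) (hl : 0 ≤ l) (g : X → ℝ) : conjOp Q (l • g) = l • conjOp Q g := by
  unfold conjOp
  have : -(l • g) = l • (-g) := by funext z; simp
  rw [this, hQ.2.2.1 l hl (-g)]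
  funext z; simp

end conjfacts

section core
variable {X : Type*} [Fintype X] [Nonempty X]

lemma exists_minf (f : X → ℝ) : ∃ x, minf f = f x := by
  obtain ⟨x, -, hx⟩ := Finset.exists_mem_eq_inf' (Finset.univ_nonempty (α := X)) f
  exact ⟨x, hx⟩

lemma core_c1 (R : (X → ℝ) → (X → ℝ)) (K : ℝ) (hK : 0 ≤ K)
    (hA : ∀ (g : X → ℝ) (x : X), -(K * (g x - minf g)) ≤ R g x)
    (h : ℝ → X → ℝ)
    (hd : ∀ t, 0 ≤ t → ∀ x : X, HasDerivWithinAt (fun s => h s x) (R (h t) x) (Set.Ici 0) t) :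
    ∀ t, 0 ≤ t → ∀ x : X, minf (h 0) ≤ h t x := by
  intro t ht x
  set m := minf (h 0) with hm
  set N : ℝ := (Fintype.card X : ℝ) with hN
  have hN1 : (1:ℝ) ≤ N := by
    rw [hN]; exact_mod_cast Fintype.card_pos
  apply le_of_forall_pos_le_add
  intro ε hε
  set C : ℝ := Real.log N + K * N * t with hC
  have hlogN : 0 ≤ Real.log N := Real.log_nonneg hN1
  have hC0 : 0 ≤ C := by
    rw [hC]; have : 0 ≤ K * N * t := by positivity
    linarith
  set β : ℝ := (C + 1) / ε with hβ
  have hβ0 : 0 < β := div_pos (by linarith) hε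
  set F : ℝ → ℝ := fun u => ∑ z : X, Real.exp (-(β * h u z)) with hF
  have hFpos : ∀ u, 0 < F u := fun u =>
    Finset.sum_pos (fun z _ => Real.exp_pos _) Finset.univ_nonempty
  set F' : ℝ → ℝ := fun u => ∑ z : X, Real.exp (-(β * h u z)) * (-(β * R (h u) z)) with hF'
  have hFd : ∀ u ∈ Set.Ici (0:ℝ), HasDerivWithinAt F (F' u) (Set.Ici 0) u := by
    intro u hu
    apply HasDerivWithinAt.fun_sum
    intro z _
    exact (((hd u hu z).const_mul β).neg).exp
  have key : ∀ u ∈ Set.Ici (0:ℝ), F' u ≤ K * N * F u := by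
    intro u hu
    set mu := minf (h u) with hmu
    have hterm : ∀ z : X, Real.exp (-(β * h u z)) * (-(β * R (h u) z))
        ≤ K * Real.exp (-(β * mu)) := by
      intro z
      have hz1 : mu ≤ h u z := minf_le _ z
      have hz2 : -R (h u) z ≤ K * (h u z - mu) := by have := hA (h u) z; linarith
      set v : ℝ := β * (h u z - mu) with hv
      have hv0 : 0 ≤ v := mul_nonneg hβ0.le (by linarith)
      have e1 : Real.exp (-(β * h u z)) = Real.exp (-(β * mu)) * Real.exp (-v) := by
        rw [← Real.exp_add]; congr 1; rw [hv]; ring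
      have e2 : v * Real.exp (-v) ≤ 1 := by
        rw [Real.exp_neg, mul_inv_le_iff₀' (Real.exp_pos v), mul_one]
        calc v ≤ v + 1 := by linarith
        _ ≤ Real.exp v := Real.add_one_le_exp v
      calc Real.exp (-(β * h u z)) * (-(β * R (h u) z))
          ≤ Real.exp (-(β * h u z)) * (β * (K * (h u z - mu))) := by
            apply mul_le_mul_of_nonneg_left _ (Real.exp_nonneg _)
            nlinarith
      _ = K * Real.exp (-(β * mu)) * (v * Real.exp (-v)) := by rw [e1, hv]; ring
      _ ≤ K * Real.exp (-(β * mu)) * 1 := by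
            apply mul_le_mul_of_nonneg_left e2
            positivity
      _ = K * Real.exp (-(β * mu)) := by ring
    have h1 : F' u ≤ N * (K * Real.exp (-(β * mu))) := by
      calc F' u ≤ ∑ _z : X, K * Real.exp (-(β*mu)) := Finset.sum_le_sum (fun z _ => hterm z)
      _ = N * (K * Real.exp (-(β * mu))) := by
        rw [Finset.sum_const, Finset.card_univ, nsmul_eq_mul, hN]
    obtain ⟨z0, hz0⟩ := exists_minf (h u)
    have h2 : Real.exp (-(β * mu)) ≤ F u := by
      have : Real.exp (-(β * h u z0)) ≤ F u :=
        Finset.single_le_sum (f := fun z => Real.exp (-(β * h u z)))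
          (fun z _ => (Real.exp_pos _).le) (Finset.mem_univ z0)
      rw [hmu, hz0]; exact this
    nlinarith [mul_le_mul_of_nonneg_left h2 (mul_nonneg hK (le_trans zero_le_one hN1))]
  set G : ℝ → ℝ := fun u => -Real.log (F u) + K * N * u with hG
  have hGd : ∀ u ∈ Set.Ici (0:ℝ), HasDerivWithinAt G (-(F' u / F u) + K * N) (Set.Ici 0) u := by
    intro u hu
    have hlog := ((hFd u hu).log (ne_of_gt (hFpos u))).neg
    have hlin : HasDerivWithinAt (fun v => K * N * v) (K * N) (Set.Ici 0) u := by
      simpa using ((hasDerivAt_id u).const_mul (K*N)).hasDerivWithinAt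
    exact hlog.add hlin
  have hG0 : ∀ u ∈ Set.Ici (0:ℝ), 0 ≤ -(F' u / F u) + K * N := by
    intro u hu
    have h1 : F' u / F u ≤ K * N := (div_le_iff₀ (hFpos u)).2 (key u hu)
    linarith
  have mono := mono_aux hGd hG0
  have hmono := mono (Set.self_mem_Ici) (by exact ht : t ∈ Set.Ici (0:ℝ)) ht
  -- bounds on log F 0 and log F t
  have b1 : Real.log (F 0) ≤ Real.log N + (-(β * m)) := by
    have hle : F 0 ≤ N * Real.exp (-(β * m)) := by
      calc F 0 ≤ ∑ _z : X, Real.exp (-(β * m)) := by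
            apply Finset.sum_le_sum
            intro z _
            apply Real.exp_le_exp.2
            have := minf_le (h 0) z
            nlinarith
      _ = N * Real.exp (-(β * m)) := by
            rw [Finset.sum_const, Finset.card_univ, nsmul_eq_mul, hN]
    calc Real.log (F 0) ≤ Real.log (N * Real.exp (-(β * m))) :=
          Real.log_le_log (hFpos 0) hle
    _ = Real.log N + (-(β * m)) := by
          rw [Real.log_mul (by linarith) (Real.exp_ne_zero _), Real.log_exp]
  have b2 : -(β * h t x) ≤ Real.log (F t) := by
    have : Real.exp (-(β * h t x)) ≤ F t :=
      Finset.single_le_sum (f := fun z => Real.exp (-(β * h t z)))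
        (fun z _ => (Real.exp_pos _).le) (Finset.mem_univ x)
    exact (Real.le_log_iff_exp_le (hFpos t)).2 this
  have hGineq : -Real.log (F 0) + K * N * 0 ≤ -Real.log (F t) + K * N * t := hmono
  have h6 : β * (m - h t x) ≤ C := by
    have h7 : β * m - Real.log N ≤ β * h t x + K * N * t := by linarith
    have h8 : β * (m - h t x) = β * m - β * h t x := by ring
    rw [h8, hC]; linarith
  have h9 : m - h t x ≤ C / β := by
    rw [le_div_iff₀ hβ0]; linarith [h6]
  have h10 : C / β ≤ ε := by
    rw [hβ, div_div_eq_mul_div, div_le_iff₀ (by linarith : (0:ℝ) < C + 1)]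
    nlinarith
  linarith

lemma core_c2 (R : (X → ℝ) → (X → ℝ)) (K : ℝ) (hK : 0 ≤ K)
    (hA : ∀ (g : X → ℝ) (x : X), -(K * (g x - minf g)) ≤ R g x)
    (h : ℝ → X → ℝ)
    (hd : ∀ t, 0 ≤ t → ∀ x : X, HasDerivWithinAt (fun s => h s x) (R (h t) x) (Set.Ici 0) t)
    (hc1 : ∀ t, 0 ≤ t → ∀ x : X, minf (h 0) ≤ h t x) :
    ∀ s t (x : X), 0 ≤ s → s ≤ t → minf (h 0) < h s x → minf (h 0) < h t x := by
  intro s t x hs0 hst hsx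
  set m := minf (h 0) with hm
  set ρ : ℝ → ℝ := fun u => (h u x - m) * Real.exp (K * u) with hρ
  set ρ' : ℝ → ℝ := fun u => R (h u) x * Real.exp (K*u) + (h u x - m) * (Real.exp (K*u) * K)
    with hρ'
  have hρd : ∀ u ∈ Set.Ici s, HasDerivWithinAt ρ (ρ' u) (Set.Ici s) u := by
    intro u hu
    have hu0 : (0:ℝ) ≤ u := le_trans hs0 hu
    have d1 : HasDerivWithinAt (fun v => h v x - m) (R (h u) x) (Set.Ici s) u :=
      ((hd u hu0 x).mono (Set.Ici_subset_Ici.2 hs0)).sub_const m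
    have d2 : HasDerivAt (fun v => Real.exp (K * v)) (Real.exp (K*u) * K) u := by
      have := ((hasDerivAt_id u).const_mul K).exp
      simpa using this
    exact d1.mul d2.hasDerivWithinAt
  have hρ0 : ∀ u ∈ Set.Ici s, 0 ≤ ρ' u := by
    intro u hu
    have hu0 : (0:ℝ) ≤ u := le_trans hs0 hu
    have h1 : m ≤ minf (h u) := le_minf (fun z => hc1 u hu0 z)
    have h2 := hA (h u) x
    have h3 : -(K * (h u x - m)) ≤ R (h u) x := by
      have h4 : K * (h u x - minf (h u)) ≤ K * (h u x - m) :=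
        mul_le_mul_of_nonneg_left (by linarith) hK
      linarith
    have h5 : 0 ≤ Real.exp (K*u) * (R (h u) x + K * (h u x - m)) :=
      mul_nonneg (Real.exp_nonneg _) (by linarith)
    have h6 : ρ' u = Real.exp (K*u) * (R (h u) x + K * (h u x - m)) := by
      rw [hρ']; ring
    linarith
  have mono := mono_aux hρd hρ0
  have hρst : ρ s ≤ ρ t := mono Set.self_mem_Ici hst hst
  have h8 : ρ t = (h t x - m) * Real.exp (K * t) := rfl
  have h9 : ρ s = (h s x - m) * Real.exp (K * s) := rfl
  rw [h8, h9] at hρst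
  have hρs : 0 < (h s x - m) * Real.exp (K * s) := mul_pos (by linarith) (Real.exp_pos _)
  by_contra hcon
  push_neg at hcon
  nlinarith [Real.exp_pos (K * t)]

lemma core_c3 (R : (X → ℝ) → (X → ℝ)) (K : ℝ) (hK : 0 ≤ K)
    (hA : ∀ (g : X → ℝ) (x : X), -(K * (g x - minf g)) ≤ R g x)
    (hC : ∀ (g : X → ℝ) (c : ℝ), R (fun z => g z + c) = R g)
    (hD : ∀ (g g' : X → ℝ) (y : X), g' ≤ g → g y = g' y → R g' y ≤ R g y)
    (hE : ∀ (p q : X → ℝ) (y : X), 0 ≤ q → R (p + q) y ≤ R p y + K * maxf q)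
    (hF : ∀ l : ℝ, 0 ≤ l → ∀ g : X → ℝ, R (l • g) = l • R g)
    (h : ℝ → X → ℝ)
    (hd : ∀ t, 0 ≤ t → ∀ x : X, HasDerivWithinAt (fun s => h s x) (R (h t) x) (Set.Ici 0) t)
    (hc1 : ∀ t, 0 ≤ t → ∀ x : X, minf (h 0) ≤ h t x) :
    ∀ s t (x : X), 0 < s → s ≤ t → minf (h 0) < h t x → minf (h 0) < h s x := by
  classical
  intro s t x hs hst hx
  by_contra hsx
  set m := minf (h 0) with hm
  have hsx' : h s x = m := le_antisymm (not_lt.1 hsx) (hc1 s hs.le x)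
  set A : Finset X := Finset.univ.filter (fun y => h s y = m) with hAdef
  have hxA : x ∈ A := by rw [hAdef]; simp [hsx']
  have hAne : A.Nonempty := ⟨x, hxA⟩
  have hmem : ∀ y ∈ A, h s y = m := by
    intro y hy; rw [hAdef] at hy; simpa using hy
  -- Step 1 : vanishing rates on A at time s
  have step1 : ∀ y ∈ A, R (h s) y = 0 := by
    intro y hy
    have hym : h s y = m := hmem y hy
    have hminfs : minf (h s) = m :=
      le_antisymm (hym ▸ minf_le (h s) y) (le_minf fun z => hc1 s hs.le z)
    have hlow : 0 ≤ R (h s) y := by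
      have := hA (h s) y
      rw [hminfs, hym] at this
      simpa using this
    have hup : R (h s) y ≤ 0 := by
      have hder := hd s hs.le y
      rw [hasDerivWithinAt_iff_tendsto_slope] at hder
      have hsub : Set.Ioo (0:ℝ) s ⊆ Set.Ici 0 \ {s} := fun u hu =>
        ⟨le_of_lt hu.1, ne_of_lt hu.2⟩
      have hne : (nhdsWithin s (Set.Ioo (0:ℝ) s)).NeBot := by
        apply mem_closure_iff_nhdsWithin_neBot.1
        rw [closure_Ioo (ne_of_lt hs)]
        exact ⟨le_of_lt hs, le_refl s⟩
      have htend := hder.mono_left (nhdsWithin_mono s hsub)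
      apply le_of_tendsto htend
      filter_upwards [self_mem_nhdsWithin] with u hu
      rw [slope_def_field]
      apply div_nonpos_of_nonneg_of_nonpos
      · rw [hym]; linarith [hc1 u hu.1.le y]
      · linarith [hu.2]
    linarith
  -- positive gap off A at time s
  set δ : ℝ := minf (fun z => if h s z = m then 1 else h s z - m) with hδdef
  have hδ : 0 < δ := by
    apply lt_minf
    intro z
    by_cases hz : h s z = m
    · rw [if_pos hz]; norm_num
    · rw [if_neg hz]
      have := hc1 s hs.le z
      exact sub_pos.2 (lt_of_le_of_ne this (Ne.symm hz))
  set Φ : ℝ → ℝ := fun u => maxf (fun z => if h s z = m then h u z - m else 0) with hΦdef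
  -- Step 3 : differential bound on A for u ≥ s
  have step3 : ∀ u, s ≤ u → ∀ y ∈ A, R (h u) y ≤ K * Φ u := by
    intro u hu y hy
    have hu0 : (0:ℝ) ≤ u := le_trans hs.le hu
    have hym : h s y = m := hmem y hy
    set μ : ℝ := maxf (fun z => h u z - m) / δ with hμdef
    have hμ0 : 0 ≤ μ := by
      apply div_nonneg _ hδ.le
      have h1 : h u x - m ≤ maxf (fun z => h u z - m) := by
        have := le_maxf (fun z => h u z - m) x
        simpa using this
      linarith [hc1 u hu0 x]
    set p : X → ℝ := fun z => μ * (h s z - m) with hpdef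
    set q : X → ℝ := fun z => if h s z = m then h u z - m else 0 with hqdef
    have hqnn : (0:X → ℝ) ≤ q := by
      intro z
      rw [hqdef]
      simp only [Pi.zero_apply]
      by_cases hz : h s z = m
      · rw [if_pos hz]; linarith [hc1 u hu0 z]
      · rw [if_neg hz]
    have hle : (fun z => h u z - m) ≤ p + q := by
      intro z
      simp only [Pi.add_apply, hpdef, hqdef]
      by_cases hz : h s z = m
      · rw [if_pos hz, hz]; simp
      · rw [if_neg hz]
        have hd1 : δ ≤ h s z - m := by
          have h2 := minf_le (fun z => if h s z = m then 1 else h s z - m) z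
          rw [if_neg hz] at h2
          rw [hδdef]; exact h2
        have hd2 : h u z - m ≤ maxf (fun z' => h u z' - m) := by
          have := le_maxf (fun z' => h u z' - m) z
          simpa using this
        have hd3 : maxf (fun z => h u z - m) = μ * δ := by
          rw [hμdef]; field_simp
        nlinarith
    have heq : (fun z => h u z - m) y = (p + q) y := by
      simp only [Pi.add_apply, hpdef, hqdef]
      rw [if_pos hym, hym]; ring
    have c1 : R (h u) y = R (fun z => h u z - m) y := by
      have h3 := hC (fun z => h u z - m) m
      have h7 : (fun z => (h u z - m) + m) = h u := by funext z; ring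
      rw [h7] at h3
      rw [← h3]
    have c2 : R (fun z => h u z - m) y ≤ R (p + q) y :=
      hD (p + q) (fun z => h u z - m) y hle heq.symm
    have c3 : R (p + q) y ≤ R p y + K * maxf q := hE p q y hqnn
    have c4 : R p y = 0 := by
      have h9 : (fun z => (h s z - m) + m) = h s := by funext z; ring
      have h10 : R (fun z => h s z - m) = R (h s) := by
        conv_rhs => rw [← h9, hC]
      have h8 : p = μ • (fun z => h s z - m) := by
        funext z; simp [hpdef]
      rw [h8, hF μ hμ0]
      simp only [Pi.smul_apply, smul_eq_mul]
      rw [h10, step1 y hy, mul_zero]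
    have c5 : maxf q = Φ u := rfl
    rw [c1]
    calc R (fun z => h u z - m) y ≤ R p y + K * maxf q := le_trans c2 c3
    _ = K * Φ u := by rw [c4, c5, zero_add]
  -- bound on target
  have hΦub : h t x - m ≤ Φ t := by
    have h1 := le_maxf (fun z => if h s z = m then h t z - m else 0) x
    rw [if_pos hsx'] at h1
    exact h1
  set cA : ℝ := (A.card : ℝ) with hcA
  have hcA1 : (1:ℝ) ≤ cA := by
    rw [hcA]; exact_mod_cast Finset.card_pos.2 hAne
  have hlogA : 0 ≤ Real.log cA := Real.log_nonneg hcA1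
  set ε0 : ℝ := h t x - m with hε0
  have hε0pos : 0 < ε0 := by rw [hε0]; linarith
  set E : ℝ := Real.exp (K * (t - s)) with hE2
  have hEpos : 0 < E := Real.exp_pos _
  set β : ℝ := (Real.log cA * E + 1) / ε0 with hβdef
  have hβ0 : 0 < β := div_pos (by nlinarith) hε0pos
  set Z : ℝ → ℝ := fun u => ∑ y ∈ A, Real.exp (β * (h u y - m)) with hZdef
  have hZpos : ∀ u, 0 < Z u := fun u => Finset.sum_pos (fun y _ => Real.exp_pos _) hAne
  set Z' : ℝ → ℝ := fun u => ∑ y ∈ A, Real.exp (β * (h u y - m)) * (β * R (h u) y) with hZ'def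
  have hZd : ∀ u ∈ Set.Ici s, HasDerivWithinAt Z (Z' u) (Set.Ici s) u := by
    intro u hu
    apply HasDerivWithinAt.fun_sum
    intro y _
    exact ((((hd u (le_trans hs.le hu) y).mono
      (Set.Ici_subset_Ici.2 hs.le)).sub_const m).const_mul β).exp
  set ψ : ℝ → ℝ := fun u => Real.log (Z u) with hψdef
  have hZ1 : ∀ u, 0 ≤ u → (1:ℝ) ≤ Z u := by
    intro u hu0
    calc (1:ℝ) = Real.exp 0 := by rw [Real.exp_zero]
    _ ≤ Real.exp (β * (h u x - m)) :=
        Real.exp_le_exp.2 (mul_nonneg hβ0.le (by linarith [hc1 u hu0 x]))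
    _ ≤ Z u := Finset.single_le_sum (f := fun y => Real.exp (β * (h u y - m)))
        (fun y _ => (Real.exp_pos _).le) hxA
  have hψnn : ∀ u, 0 ≤ u → 0 ≤ ψ u := fun u hu0 => Real.log_nonneg (hZ1 u hu0)
  have hβΦψ : ∀ u, s ≤ u → β * Φ u ≤ ψ u := by
    intro u hu
    have hu0 : (0:ℝ) ≤ u := le_trans hs.le hu
    obtain ⟨z0, hz0⟩ := exists_maxf (fun z => if h s z = m then h u z - m else 0)
    by_cases hz : h s z0 = m
    · have hz0A : z0 ∈ A := by rw [hAdef]; simp [hz]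
      have hΦval : Φ u = h u z0 - m := by
        show maxf (fun z => if h s z = m then h u z - m else 0) = h u z0 - m
        rw [hz0]; simp [hz]
      have h1 : Real.exp (β * Φ u) ≤ Z u := by
        rw [hΦval]
        exact Finset.single_le_sum (f := fun y => Real.exp (β * (h u y - m)))
          (fun y _ => (Real.exp_pos _).le) hz0A
      exact (Real.le_log_iff_exp_le (hZpos u)).2 h1
    · have hΦval : Φ u = 0 := by
        show maxf (fun z => if h s z = m then h u z - m else 0) = 0
        rw [hz0]; simp [hz]
      rw [hΦval, mul_zero]
      exact hψnn u hu0
  -- the decaying quantity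
  set χ : ℝ → ℝ := fun u => ψ u * Real.exp (-(K * u)) with hχdef
  set χ' : ℝ → ℝ := fun u =>
    Z' u / Z u * Real.exp (-(K*u)) + ψ u * (Real.exp (-(K*u)) * (-K)) with hχ'def
  have hχd : ∀ u ∈ Set.Ici s, HasDerivWithinAt χ (χ' u) (Set.Ici s) u := by
    intro u hu
    have d1 : HasDerivWithinAt ψ (Z' u / Z u) (Set.Ici s) u :=
      (hZd u hu).log (ne_of_gt (hZpos u))
    have d2 : HasDerivAt (fun v => Real.exp (-(K * v))) (Real.exp (-(K*u)) * (-K)) u := by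
      have := (((hasDerivAt_id u).const_mul K).neg).exp
      simpa using this
    exact d1.mul d2.hasDerivWithinAt
  have hχ0 : ∀ u ∈ Set.Ici s, χ' u ≤ 0 := by
    intro u hu
    have hu0 : (0:ℝ) ≤ u := le_trans hs.le hu
    have hZ'le : Z' u ≤ (K * ψ u) * Z u := by
      have hb : ∀ y ∈ A, Real.exp (β * (h u y - m)) * (β * R (h u) y)
          ≤ Real.exp (β * (h u y - m)) * (β * (K * Φ u)) := by
        intro y hy
        exact mul_le_mul_of_nonneg_left
          (mul_le_mul_of_nonneg_left (step3 u hu y hy) hβ0.le) (Real.exp_nonneg _)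
      have h2 : Z' u ≤ ∑ y ∈ A, Real.exp (β * (h u y - m)) * (β * (K * Φ u)) :=
        Finset.sum_le_sum hb
      have h3 : ∑ y ∈ A, Real.exp (β * (h u y - m)) * (β * (K * Φ u))
          = (β * (K * Φ u)) * Z u := by
        rw [← Finset.sum_mul, hZdef]; ring
      have h4 : β * Φ u ≤ ψ u := hβΦψ u hu
      have h5 : β * (K * Φ u) ≤ K * ψ u := by
        calc β * (K * Φ u) = K * (β * Φ u) := by ring
        _ ≤ K * ψ u := mul_le_mul_of_nonneg_left h4 hK
      have h6 : (β * (K * Φ u)) * Z u ≤ (K * ψ u) * Z u :=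
        mul_le_mul_of_nonneg_right h5 (hZpos u).le
      linarith
    have h7 : Z' u / Z u ≤ K * ψ u := (div_le_iff₀ (hZpos u)).2 hZ'le
    have h8 : χ' u = Real.exp (-(K*u)) * (Z' u / Z u - K * ψ u) := by
      rw [hχ'def]; ring
    rw [h8]
    exact mul_nonpos_of_nonneg_of_nonpos (Real.exp_nonneg _) (by linarith)
  have anti := anti_aux hχd hχ0
  have hts : χ t ≤ χ s := anti Set.self_mem_Ici hst hst
  have hψs : ψ s = Real.log cA := by
    have hZs : Z s = cA := by
      show ∑ y ∈ A, Real.exp (β * (h s y - m)) = cA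
      calc ∑ y ∈ A, Real.exp (β * (h s y - m)) = ∑ _y ∈ A, (1:ℝ) := by
            apply Finset.sum_congr rfl
            intro y hy
            rw [hmem y hy, sub_self, mul_zero, Real.exp_zero]
      _ = cA := by rw [Finset.sum_const, nsmul_eq_mul, mul_one, hcA]
    show Real.log (Z s) = Real.log cA
    rw [hZs]
  have h8 : ψ t ≤ Real.log cA * E := by
    have eA : Real.exp (-(K*t)) * Real.exp (K*t) = 1 := by
      rw [← Real.exp_add]; simp
    have eB : Real.exp (-(K*s)) * Real.exp (K*t) = E := by
      rw [← Real.exp_add, hE2]; congr 1; ring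
    have hc : χ t = ψ t * Real.exp (-(K*t)) := rfl
    have hc2 : χ s = ψ s * Real.exp (-(K*s)) := rfl
    calc ψ t = (ψ t * Real.exp (-(K*t))) * Real.exp (K*t) := by
          rw [mul_assoc, eA, mul_one]
    _ ≤ (ψ s * Real.exp (-(K*s))) * Real.exp (K*t) := by
          rw [← hc, ← hc2]
          exact mul_le_mul_of_nonneg_right hts (Real.exp_nonneg _)
    _ = ψ s * E := by rw [mul_assoc, eB]
    _ = Real.log cA * E := by rw [hψs]
  have h11 : β * ε0 ≤ ψ t := by
    have h12 := hβΦψ t hst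
    have h13 : ε0 ≤ Φ t := hΦub
    have h15 : β * ε0 ≤ β * Φ t := mul_le_mul_of_nonneg_left h13 hβ0.le
    linarith
  have h14 : β * ε0 = Real.log cA * E + 1 := by
    rw [hβdef]; field_simp
  linarith

lemma side (R : (X → ℝ) → (X → ℝ)) (K : ℝ) (hK : 0 ≤ K)
    (hA : ∀ (g : X → ℝ) (x : X), -(K * (g x - minf g)) ≤ R g x)
    (hC : ∀ (g : X → ℝ) (c : ℝ), R (fun z => g z + c) = R g)
    (hD : ∀ (g g' : X → ℝ) (y : X), g' ≤ g → g y = g' y → R g' y ≤ R g y)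
    (hE : ∀ (p q : X → ℝ) (y : X), 0 ≤ q → R (p + q) y ≤ R p y + K * maxf q)
    (hF : ∀ l : ℝ, 0 ≤ l → ∀ g : X → ℝ, R (l • g) = l • R g)
    (h : ℝ → X → ℝ)
    (hd : ∀ t, 0 ≤ t → ∀ x : X, HasDerivWithinAt (fun s => h s x) (R (h t) x) (Set.Ici 0) t)
    (x : X) (t s : ℝ) (ht : 0 < t) (hs : 0 < s) :
    (minf (h 0) < h 0 x → minf (h 0) < h t x) ∧
      (minf (h 0) < h t x ↔ minf (h 0) < h s x) := by
  have c1 := core_c1 R K hK hA h hd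
  have c2 := core_c2 R K hK hA h hd c1
  have c3 := core_c3 R K hK hA hC hD hE hF h hd c1
  refine ⟨fun hx => c2 0 t x le_rfl ht.le hx, ?_⟩
  rcases le_total t s with hts | hts
  · exact ⟨fun H => c2 t s x ht.le hts H, fun H => c3 t s x ht hts H⟩
  · exact ⟨fun H => c3 s t x hs hts H, fun H => c2 s t x hs.le hts H⟩

end core

theorem stmt19' {X : Type*} [Fintype X] [Nonempty X]
    (Q : (X → ℝ) → (X → ℝ)) (hQ : IsLTRO Q)
    (T : ℝ → (X → ℝ) → (X → ℝ))
    (hT : (∀ f : X → ℝ, T 0 f = f) ∧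
      (∀ f : X → ℝ, ∀ t : ℝ, 0 ≤ t →
        HasDerivWithinAt (fun s => T s f) (Q (T t f)) (Set.Ici 0) t))
    (f : X → ℝ) (x : X) (t s : ℝ) (ht : 0 < t) (hs : 0 < s) :
    ((minf f < f x → minf f < T t f x) ∧
        (minf f < T t f x ↔ minf f < T s f x)) ∧
      ((f x < maxf f → T t f x < maxf f) ∧
        (T t f x < maxf f ↔ T s f x < maxf f)) ∧
      ((minf f < f x → minf f < conjOp (T t) f x) ∧
        (minf f < conjOp (T t) f x ↔ minf f < conjOp (T s) f x)) ∧
      ((f x < maxf f → conjOp (T t) f x < maxf f) ∧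
        (conjOp (T t) f x < maxf f ↔ conjOp (T s) f x < maxf f)) := by
  obtain ⟨hT0, hTd⟩ := hT
  have hKn : 0 ≤ Kc Q := Kc_nonneg
  -- hypotheses for R = Q
  have hAQ := factA hQ
  have hCQ := ltro_add_const hQ
  have hDQ := ltro_monoOff hQ
  have hEQ := ltro_mixed hQ
  have hFQ := hQ.2.2.1
  -- hypotheses for R = conjOp Q
  have hAc := factA_conj hQ
  have hCc := conj_add_const hQ
  have hDc := conj_monoOff hQ
  have hEc := conj_mixed hQ
  have hFc := conj_smul hQ
  -- instantiation (i) : h u = T u f, R = Q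
  have hd1 : ∀ u, 0 ≤ u → ∀ y : X,
      HasDerivWithinAt (fun v => T v f y) (Q (T u f) y) (Set.Ici 0) u :=
    fun u hu y => proj_deriv (hTd f u hu) y
  have S1 := side Q (Kc Q) hKn hAQ hCQ hDQ hEQ hFQ (fun u => T u f) hd1 x t s ht hs
  beta_reduce at S1
  rw [hT0 f] at S1
  -- instantiation (iv) : h u = T u (-f), R = Q
  have hd4 : ∀ u, 0 ≤ u → ∀ y : X,
      HasDerivWithinAt (fun v => T v (-f) y) (Q (T u (-f)) y) (Set.Ici 0) u :=
    fun u hu y => proj_deriv (hTd (-f) u hu) y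
  have S4 := side Q (Kc Q) hKn hAQ hCQ hDQ hEQ hFQ (fun u => T u (-f)) hd4 x t s ht hs
  beta_reduce at S4
  rw [hT0 (-f)] at S4
  -- instantiation (ii) : h u = -(T u f), R = conjOp Q
  have hd2 : ∀ u, 0 ≤ u → ∀ y : X,
      HasDerivWithinAt (fun v => -(T v f) y) (conjOp Q (-(T u f)) y) (Set.Ici 0) u := by
    intro u hu y
    have h1 : conjOp Q (-(T u f)) y = -(Q (T u f) y) := by
      simp [conjOp]
    rw [h1]
    exact (proj_deriv (hTd f u hu) y).neg
  have S2 := side (conjOp Q) (Kc Q) hKn hAc hCc hDc hEc hFc (fun u => -(T u f)) hd2 x t s ht hs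
  beta_reduce at S2
  rw [hT0 f] at S2
  -- instantiation (iii) : h u = -(T u (-f)), R = conjOp Q
  have hd3 : ∀ u, 0 ≤ u → ∀ y : X,
      HasDerivWithinAt (fun v => -(T v (-f)) y) (conjOp Q (-(T u (-f))) y) (Set.Ici 0) u := by
    intro u hu y
    have h1 : conjOp Q (-(T u (-f))) y = -(Q (T u (-f)) y) := by
      simp [conjOp]
    rw [h1]
    exact (proj_deriv (hTd (-f) u hu) y).neg
  have S3 := side (conjOp Q) (Kc Q) hKn hAc hCc hDc hEc hFc
    (fun u => -(T u (-f))) hd3 x t s ht hs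
  beta_reduce at S3
  rw [hT0 (-f)] at S3
  simp only [minf_neg, maxf_neg, Pi.neg_apply, neg_neg, neg_lt_neg_iff] at S2 S3 S4
  refine ⟨S1, S2, S3, ⟨?_, ?_⟩⟩
  · intro hfx
    have := S4.1 hfx
    show -(T t (-f) x) < maxf f
    linarith
  · show -(T t (-f) x) < maxf f ↔ -(T s (-f) x) < maxf f
    constructor
    · intro H
      have h1 : -maxf f < T t (-f) x := by linarith
      have := S4.2.1 h1
      linarith
    · intro H
      have h1 : -maxf f < T s (-f) x := by linarith
      have := S4.2.2 h1
      linarith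

/-- Min/max sign-preservation properties of `T_t` and its conjugate `T̄_t`. -/
theorem stmt19 {X : Type*} [Fintype X] [Nonempty X]
    (Q : (X → ℝ) → (X → ℝ)) (hQ : IsLTRO Q)
    (T : ℝ → (X → ℝ) → (X → ℝ)) (hT : IsSol Q T)
    (f : X → ℝ) (x : X) (t s : ℝ) (ht : 0 < t) (hs : 0 < s) :
    ((minf f < f x → minf f < T t f x) ∧
        (minf f < T t f x ↔ minf f < T s f x)) ∧
      ((f x < maxf f → T t f x < maxf f) ∧
        (T t f x < maxf f ↔ T s f x < maxf f)) ∧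
      ((minf f < f x → minf f < conjOp (T t) f x) ∧
        (minf f < conjOp (T t) f x ↔ minf f < conjOp (T s) f x)) ∧
      ((f x < maxf f → conjOp (T t) f x < maxf f) ∧
        (conjOp (T t) f x < maxf f ↔ conjOp (T s) f x < maxf f)) := by
  exact stmt19' Q hQ T ⟨hT.1, hT.2⟩ f x t s ht hs
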